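/- Let β ∈ ℝ with β > 0, let δ > 0, ε > 0 and k ∈ ℕ. Then there exists t > exp^∘k(0) with M_{ε,k}(t) < β such that the function h(x) := (log x)^{δ} satisfies h(x + β − M_{ε,k}(x)) − h(x) ≥ M_{ε,k}(x) for all x ≥ t (i.e. the restriction of h to [t,∞) is an upper map of type (β,ε,k) for real β). -/

import Mathlib

open Filter Set

/-- `M_{ε,k}(x) = (∏_{j=0}^{k-1} log^∘j(x))⁻¹ · (log^∘k(x))^{-(1+ε)}`. -/
noncomputable def Mfun (ε : ℝ) (k : ℕ) (x : ℝ) : ℝ :=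
  (∏ j ∈ Finset.range k, Real.log^[j] x)⁻¹ * (Real.log^[k] x) ^ (-(1 + ε))

private lemma one_le_prod_real {ι : Type*} {s : Finset ι} {f : ι → ℝ}
    (h : ∀ i ∈ s, 1 ≤ f i) : 1 ≤ ∏ i ∈ s, f i := by
  calc (1:ℝ) = ∏ _i ∈ s, (1:ℝ) := by simp
  _ ≤ ∏ i ∈ s, f i := Finset.prod_le_prod (by intro i _; norm_num) h

private lemma tendsto_iter_log : ∀ j : ℕ, Tendsto (Real.log^[j]) atTop atTop := by
  intro j
  induction j with
  | zero => simpa using tendsto_id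
  | succ n ih =>
    rw [Function.iterate_succ']
    exact Real.tendsto_log_atTop.comp ih

private lemma mvt_rpow {δ : ℝ} (hδ : 0 < δ) {a b : ℝ} (ha : 1 ≤ a) (hab : a < b)
    (hb : b ≤ 2 * a) : δ / 2 * a ^ (δ - 1) * (b - a) ≤ b ^ δ - a ^ δ := by
  have ha0 : (0:ℝ) < a := lt_of_lt_of_le one_pos ha
  obtain ⟨c, hc, hc'⟩ := exists_hasDerivAt_eq_slope (fun u => u ^ δ)
    (fun u => δ * u ^ (δ - 1)) hab
    (fun u hu => (Real.continuousAt_rpow_const u δ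
      (Or.inl (ne_of_gt (lt_of_lt_of_le ha0 hu.1)))).continuousWithinAt)
    (fun u hu => Real.hasDerivAt_rpow_const (Or.inl (ne_of_gt (lt_trans ha0 hu.1))))
  have hc0 : (0:ℝ) < c := lt_trans ha0 hc.1
  have hba : (0:ℝ) < b - a := sub_pos.mpr hab
  have key : b ^ δ - a ^ δ = δ * c ^ (δ - 1) * (b - a) := by
    rw [eq_comm, div_eq_iff (ne_of_gt hba)] at hc'
    linarith [hc']
  rw [key]
  have hhalf : (1/2 : ℝ) * a ^ (δ - 1) ≤ c ^ (δ - 1) := by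
    rcases le_or_gt 1 δ with h1 | h1
    · have h2 : a ^ (δ - 1) ≤ c ^ (δ - 1) :=
        Real.rpow_le_rpow ha0.le hc.1.le (by linarith)
      nlinarith [Real.rpow_pos_of_pos ha0 (δ - 1)]
    · have hc2a : c ≤ 2 * a := le_trans hc.2.le hb
      have h2a : (2 * a) ^ (δ - 1) ≤ c ^ (δ - 1) :=
        Real.rpow_le_rpow_of_nonpos hc0 hc2a (by linarith)
      have hmul : ((2:ℝ) * a) ^ (δ - 1) = (2:ℝ) ^ (δ - 1) * a ^ (δ - 1) :=
        Real.mul_rpow (by norm_num) ha0.le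
      have h2 : (1/2 : ℝ) ≤ (2:ℝ) ^ (δ - 1) := by
        have h3 := Real.rpow_le_rpow_of_exponent_le (x := 2) (by norm_num)
          (by linarith : (-1:ℝ) ≤ δ - 1)
        rw [Real.rpow_neg_one] at h3
        linarith [h3]
      have hap : (0:ℝ) < a ^ (δ - 1) := Real.rpow_pos_of_pos ha0 _
      nlinarith
  have hap : (0:ℝ) ≤ a ^ (δ - 1) := (Real.rpow_pos_of_pos ha0 _).le
  nlinarith [mul_le_mul_of_nonneg_left hhalf (mul_nonneg hδ.le hba.le)]

theorem logarithmic_power_is_upper_map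
    (β : ℝ) (hβ : 0 < β) (δ : ℝ) (hδ : 0 < δ) (ε : ℝ) (hε : 0 < ε) (k : ℕ) :
    ∃ t : ℝ, Real.exp^[k] 0 < t ∧ Mfun ε k t < β ∧
      ∀ x, t ≤ x →
        Mfun ε k x ≤
          Real.log (x + (β - Mfun ε k x)) ^ δ - Real.log x ^ δ := by
  set c : ℝ := β / 2 with hc_def
  set C : ℝ := δ * β / 8 with hC_def
  have hc : 0 < c := by positivity
  have hC : 0 < C := by positivity
  have ev1 : ∀ᶠ x in atTop, ∀ j ∈ Finset.range (k + 2), 1 ≤ Real.log^[j] x := by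
    rw [eventually_all_finset]
    intro j _
    exact (tendsto_iter_log j).eventually_ge_atTop 1
  have ev2 : ∀ᶠ x : ℝ in atTop, c ≤ x := eventually_ge_atTop c
  have ev4 : ∀ᶠ x in atTop, 2 / β ≤ Real.log^[k] x :=
    (tendsto_iter_log k).eventually_ge_atTop (2 / β)
  have ev3 : ∀ᶠ x in atTop, Mfun ε k x * (x * Real.log x ^ (1 - δ)) ≤ C := by
    cases k with
    | zero =>
      have hlog := (isLittleO_log_rpow_atTop hε).def hC
      filter_upwards [ev1, hlog, eventually_gt_atTop (0:ℝ)] with x h1 h2 hx0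
      have hlx : 1 ≤ Real.log x := by simpa using h1 1 (by simp)
      have hxe : (0:ℝ) < x ^ ε := Real.rpow_pos_of_pos hx0 ε
      have h2' : Real.log x ≤ C * x ^ ε := by
        rw [Real.norm_eq_abs, Real.norm_eq_abs, abs_of_nonneg (by linarith),
          abs_of_nonneg hxe.le] at h2
        exact h2
      have hM : Mfun ε 0 x = x ^ (-(1 + ε)) := by simp [Mfun]
      rw [hM]
      have hpow : x ^ (-(1 + ε)) * x = x ^ (-ε) := by
        nth_rewrite 2 [← Real.rpow_one x]
        rw [← Real.rpow_add hx0]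
        norm_num
      have hlog_pow : Real.log x ^ (1 - δ) ≤ Real.log x := by
        nth_rewrite 2 [← Real.rpow_one (Real.log x)]
        exact Real.rpow_le_rpow_of_exponent_le hlx (by linarith)
      calc x ^ (-(1 + ε)) * (x * Real.log x ^ (1 - δ))
          = x ^ (-ε) * Real.log x ^ (1 - δ) := by rw [← mul_assoc, hpow]
        _ ≤ x ^ (-ε) * Real.log x :=
            mul_le_mul_of_nonneg_left hlog_pow (Real.rpow_pos_of_pos hx0 _).le
        _ ≤ x ^ (-ε) * (C * x ^ ε) :=
            mul_le_mul_of_nonneg_left h2' (Real.rpow_pos_of_pos hx0 _).le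
        _ = C := by
            rw [← mul_assoc, mul_comm (x ^ (-ε)) C, mul_assoc, ← Real.rpow_add hx0]
            norm_num
    | succ m =>
      have hlt : Tendsto (fun x => Real.log x ^ δ) atTop atTop :=
        (tendsto_rpow_atTop hδ).comp Real.tendsto_log_atTop
      filter_upwards [ev1, hlt.eventually_ge_atTop (1 / C),
        eventually_gt_atTop (0:ℝ)] with x h1 h2 hx0
      have hlx : 1 ≤ Real.log x := by simpa using h1 1 (by simp)
      have hlx0 : 0 < Real.log x := lt_of_lt_of_le one_pos hlx
      have hL : 1 ≤ Real.log^[m + 1] x := h1 (m + 1) (by simp)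
      have hL0 : 0 < Real.log^[m + 1] x := lt_of_lt_of_le one_pos hL
      have hT : Real.log x * x ≤ ∏ j ∈ Finset.range (m + 2), Real.log^[j] x := by
        rw [Finset.prod_range_succ' (fun j => Real.log^[j] x) (m + 1),
          Finset.prod_range_succ' (fun j => Real.log^[j + 1] x) m]
        simp only [Function.iterate_zero, id_eq, Function.iterate_one, zero_add]
        have hrest : 1 ≤ ∏ j ∈ Finset.range m, Real.log^[j + 1 + 1] x :=
          one_le_prod_real (fun i hi => h1 (i + 1 + 1) (by
            simp only [Finset.mem_range] at hi ⊢; omega))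
        nlinarith [mul_le_mul_of_nonneg_right hrest (mul_pos hlx0 hx0).le]
      have hP1 : 1 ≤ ∏ j ∈ Finset.range (m + 1), Real.log^[j] x :=
        one_le_prod_real (fun i hi => h1 i (by
          simp only [Finset.mem_range] at hi ⊢; omega))
      have hP0 : 0 < ∏ j ∈ Finset.range (m + 1), Real.log^[j] x :=
        lt_of_lt_of_le one_pos hP1
      have hT0 : 0 < ∏ j ∈ Finset.range (m + 2), Real.log^[j] x :=
        lt_of_lt_of_le (mul_pos hlx0 hx0) hT
      have hMle : Mfun ε (m + 1) x ≤ (Real.log x * x)⁻¹ := by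
        have hLe : Real.log^[m + 1] x ^ (-(1 + ε)) ≤ (Real.log^[m + 1] x)⁻¹ := by
          rw [← Real.rpow_neg_one]
          exact Real.rpow_le_rpow_of_exponent_le hL (by linarith)
        calc Mfun ε (m + 1) x
            ≤ (∏ j ∈ Finset.range (m + 1), Real.log^[j] x)⁻¹ *
              (Real.log^[m + 1] x)⁻¹ :=
              mul_le_mul_of_nonneg_left hLe (inv_nonneg.2 hP0.le)
          _ = (∏ j ∈ Finset.range (m + 2), Real.log^[j] x)⁻¹ := by
              rw [Finset.prod_range_succ (fun j => Real.log^[j] x) (m + 1), mul_inv]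
          _ ≤ (Real.log x * x)⁻¹ := by
              apply inv_anti₀ (mul_pos hlx0 hx0) hT
      have hM0 : 0 ≤ x * Real.log x ^ (1 - δ) :=
        (mul_pos hx0 (Real.rpow_pos_of_pos hlx0 _)).le
      calc Mfun ε (m + 1) x * (x * Real.log x ^ (1 - δ))
          ≤ (Real.log x * x)⁻¹ * (x * Real.log x ^ (1 - δ)) :=
            mul_le_mul_of_nonneg_right hMle hM0
        _ = Real.log x ^ (1 - δ) * (Real.log x)⁻¹ := by
            field_simp
        _ = Real.log x ^ (-δ) := by
            rw [← Real.rpow_neg_one (Real.log x), ← Real.rpow_add hlx0]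
            congr 1
            ring
        _ ≤ C := by
            rw [Real.rpow_neg hlx0.le]
            have hCp : 0 < Real.log x ^ δ := Real.rpow_pos_of_pos hlx0 _
            rw [inv_le_comm₀ hCp hC]
            simpa [one_div] using h2
  have main : ∀ᶠ x in atTop, Mfun ε k x ≤ β / 2 ∧
      Mfun ε k x ≤ Real.log (x + (β - Mfun ε k x)) ^ δ - Real.log x ^ δ := by
    filter_upwards [ev1, ev2, ev3, ev4, eventually_gt_atTop (0:ℝ)]
      with x h1 h2 h3 h4 hx0
    have hlx : 1 ≤ Real.log x := by simpa using h1 1 (by simp)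
    have hlx0 : 0 < Real.log x := lt_of_lt_of_le one_pos hlx
    have hL : 1 ≤ Real.log^[k] x := h1 k (by simp only [Finset.mem_range]; omega)
    have hL0 : 0 < Real.log^[k] x := lt_of_lt_of_le one_pos hL
    have hP1 : 1 ≤ ∏ j ∈ Finset.range k, Real.log^[j] x :=
      one_le_prod_real (fun i hi => h1 i (by
        simp only [Finset.mem_range] at hi ⊢; omega))
    have hP0 : 0 < ∏ j ∈ Finset.range k, Real.log^[j] x := lt_of_lt_of_le one_pos hP1
    have hM2 : Mfun ε k x ≤ β / 2 := by
      have hLe : Real.log^[k] x ^ (-(1 + ε)) ≤ (Real.log^[k] x)⁻¹ := by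
        rw [← Real.rpow_neg_one]
        exact Real.rpow_le_rpow_of_exponent_le hL (by linarith)
      have hinv : (Real.log^[k] x)⁻¹ ≤ β / 2 := by
        have h5 : (2 / β)⁻¹ = β / 2 := by rw [inv_div]
        calc (Real.log^[k] x)⁻¹ ≤ (2 / β)⁻¹ :=
              inv_anti₀ (by positivity) h4
          _ = β / 2 := h5
      have h6 : (∏ j ∈ Finset.range k, Real.log^[j] x)⁻¹ ≤ 1 := by
        rw [inv_le_one_iff₀]
        right; exact hP1
      calc Mfun ε k x
          ≤ 1 * (β / 2) := by
            apply mul_le_mul h6 (le_trans hLe hinv)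
              (Real.rpow_pos_of_pos hL0 _).le (by norm_num)
        _ = β / 2 := one_mul _
    refine ⟨hM2, ?_⟩
    have hA0 : 0 < Real.log x ^ (1 - δ) := Real.rpow_pos_of_pos hlx0 _
    have hM3 : Mfun ε k x ≤ C * Real.log x ^ (δ - 1) / x := by
      have hxA : 0 < x * Real.log x ^ (1 - δ) := mul_pos hx0 hA0
      have h7 : Mfun ε k x ≤ C / (x * Real.log x ^ (1 - δ)) := (le_div_iff₀ hxA).2 h3
      refine h7.trans_eq ?_
      have hAA : Real.log x ^ (δ - 1) * Real.log x ^ (1 - δ) = 1 := by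
        rw [← Real.rpow_add hlx0]
        norm_num
      rw [div_eq_div_iff (ne_of_gt hxA) (ne_of_gt hx0)]
      calc C * x = C * x * 1 := by ring
        _ = C * x * (Real.log x ^ (δ - 1) * Real.log x ^ (1 - δ)) := by rw [hAA]
        _ = C * Real.log x ^ (δ - 1) * (x * Real.log x ^ (1 - δ)) := by ring
    set a := Real.log x with ha_def
    set b := Real.log (x + c) with hb_def
    have hxc0 : 0 < x + c := by linarith
    have hab : a < b := Real.log_lt_log hx0 (by linarith)
    have hbsub : b - a = Real.log ((x + c) / x) := by
      rw [hb_def, ha_def, ← Real.log_div (ne_of_gt hxc0) (ne_of_gt hx0)]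
    have hy0 : 0 < (x + c) / x := by positivity
    have hup : b - a ≤ c / x := by
      have h8 := Real.log_le_sub_one_of_pos hy0
      have h9 : (x + c) / x - 1 = c / x := by field_simp; ring
      rw [hbsub]; linarith
    have hcx1 : c / x ≤ 1 := by rw [div_le_one hx0]; exact h2
    have hb2a : b ≤ 2 * a := by linarith
    have hlow : c / (2 * x) ≤ b - a := by
      have h6 := Real.one_sub_inv_le_log_of_pos hy0
      have h7 : ((x + c) / x)⁻¹ = x / (x + c) := by rw [inv_div]
      have h8 : 1 - x / (x + c) = c / (x + c) := by field_simp; ring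
      have h9 : c / (2 * x) ≤ c / (x + c) := by
        apply div_le_div_of_nonneg_left hc.le hxc0 (by linarith)
      rw [hbsub]
      rw [h7] at h6
      linarith
    have hmvt := mvt_rpow hδ hlx hab hb2a
    have hap : 0 < a ^ (δ - 1) := Real.rpow_pos_of_pos hlx0 _
    have hstep : C * a ^ (δ - 1) / x ≤ b ^ δ - a ^ δ := by
      have h10 : δ / 2 * a ^ (δ - 1) * (c / (2 * x)) ≤ δ / 2 * a ^ (δ - 1) * (b - a) :=
        mul_le_mul_of_nonneg_left hlow (by positivity)
      have heq : δ / 2 * a ^ (δ - 1) * (c / (2 * x)) = C * a ^ (δ - 1) / x := by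
        rw [hC_def, hc_def]
        field_simp
        ring
      linarith
    have hmono : b ^ δ ≤ Real.log (x + (β - Mfun ε k x)) ^ δ := by
      apply Real.rpow_le_rpow (by linarith : (0:ℝ) ≤ b) _ hδ.le
      apply Real.log_le_log hxc0
      have h11 : c ≤ β - Mfun ε k x := by linarith
      linarith
    calc Mfun ε k x ≤ C * a ^ (δ - 1) / x := hM3
      _ ≤ b ^ δ - a ^ δ := hstep
      _ ≤ _ := by linarith
  obtain ⟨t₀, ht₀⟩ := eventually_atTop.mp main
  refine ⟨max t₀ (Real.exp^[k] 0 + 1), ?_, ?_, ?_⟩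
  · exact lt_of_lt_of_le (lt_add_one _) (le_max_right _ _)
  · exact lt_of_le_of_lt (ht₀ _ (le_max_left _ _)).1 (by linarith)
  · intro x hx
    exact (ht₀ x (le_trans (le_max_left _ _) hx)).2
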